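/- Let g ≥ 2 and b > 1 be integers with gcd(b,g) = 1, let a be a positive integer with gcd(a,b) = 1, and let j ≥ 1. There exists a nonnegative integer C (depending only on g, a, b and j) such that for all k ≥ c_g(b) and all s, s' ∈ {0,…,g^j−1}: |ν_k(s) − ν_k(s')| ≤ C. -/

import Mathlib

lemma ordg_set_nonempty {g m : ℕ} (hm : 0 < m) (h : Nat.Coprime g m) :
    ({n : ℕ | 0 < n ∧ g ^ n ≡ 1 [MOD m]}).Nonempty := by
  exact ⟨m.totient, Nat.totient_pos.2 hm, Nat.ModEq.pow_totient h⟩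

/-- `ordg g m = min {n ≥ 1 : g^n ≡ 1 (mod m)}`, the multiplicative order of `g` modulo `m`. -/
noncomputable def ordg (g m : ℕ) : ℕ := sInf {n : ℕ | 0 < n ∧ g ^ n ≡ 1 [MOD m]}

lemma ordg_pos {g m : ℕ} (hm : 0 < m) (h : Nat.Coprime g m) : 0 < ordg g m :=
  (Nat.sInf_mem (ordg_set_nonempty hm h)).1

lemma ordg_modeq {g m : ℕ} (hm : 0 < m) (h : Nat.Coprime g m) :
    g ^ (ordg g m) ≡ 1 [MOD m] :=
  (Nat.sInf_mem (ordg_set_nonempty hm h)).2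

lemma ordg_le {g m n : ℕ} (hn : 0 < n) (h : g ^ n ≡ 1 [MOD m]) : ordg g m ≤ n :=
  Nat.sInf_le ⟨hn, h⟩

lemma ordg_dvd {g m : ℕ} (hm : 0 < m) (hc : Nat.Coprime g m) {n : ℕ}
    (h : g ^ n ≡ 1 [MOD m]) : ordg g m ∣ n := by
  rcases Nat.eq_zero_or_pos n with rfl | hn
  · exact dvd_zero _
  have hdpos := ordg_pos hm hc
  set d := ordg g m with hd
  have hr : g ^ (n % d) ≡ 1 [MOD m] := by
    have h1 : g ^ n = (g ^ d) ^ (n / d) * g ^ (n % d) := by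
      rw [← pow_mul, ← pow_add, Nat.div_add_mod]
    have h2 : (g ^ d) ^ (n / d) * g ^ (n % d) ≡ 1 ^ (n / d) * g ^ (n % d) [MOD m] :=
      Nat.ModEq.mul_right _ ((ordg_modeq hm hc).pow _)
    calc g ^ (n % d) = 1 ^ (n / d) * g ^ (n % d) := by ring
      _ ≡ (g ^ d) ^ (n / d) * g ^ (n % d) [MOD m] := h2.symm
      _ = g ^ n := h1.symm
      _ ≡ 1 [MOD m] := h
  rcases Nat.eq_zero_or_pos (n % d) with h0 | h0
  · exact Nat.dvd_of_mod_eq_zero h0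
  · have := ordg_le h0 hr
    have := Nat.mod_lt n hdpos
    omega

lemma ordg_dvd_of_dvd {g m m' : ℕ} (hm : 0 < m) (hc : Nat.Coprime g m)
    (hdvd : m' ∣ m) (hm' : 0 < m') (hc' : Nat.Coprime g m') :
    ordg g m' ∣ ordg g m :=
  ordg_dvd hm' hc' ((ordg_modeq hm hc).of_dvd hdvd)

/-- Exact p-adic valuation predicate on integers. -/
def EV (p : ℕ) (x : ℤ) (s : ℕ) : Prop := (p:ℤ)^s ∣ x ∧ ¬ (p:ℤ)^(s+1) ∣ x

lemma pow_one_add_int (y : ℤ) (n : ℕ) : ∃ z : ℤ, (1+y)^n = 1 + n*y + y^2*z := by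
  induction n with
  | zero => exact ⟨0, by ring⟩
  | succ n ih =>
    obtain ⟨z, hz⟩ := ih
    refine ⟨z + n + y*z, ?_⟩
    rw [pow_succ, hz]; push_cast; ring

lemma EV_mul_unit {p : ℕ} (hp : p.Prime) {x : ℤ} {s : ℕ} {u : ℤ}
    (hu : ¬ (p:ℤ) ∣ u) (h : EV p x s) : EV p (u*x) s := by
  obtain ⟨h1, h2⟩ := h
  refine ⟨h1.mul_left u, fun hc => ?_⟩
  obtain ⟨v, hv⟩ := h1
  -- x = p^s * v ; u*x = p^s * (u*v) ; p^(s+1) ∣ p^s*(u*v) → p ∣ u*v → p ∣ v (since ¬p∣u) → p^(s+1)∣x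
  subst hv
  have hp0 : (p:ℤ)^s ≠ 0 := pow_ne_zero _ (by exact_mod_cast hp.ne_zero)
  have : (p:ℤ) ∣ u * v := by
    have := hc
    rw [pow_succ] at this
    rw [show u * ((p:ℤ)^s * v) = (p:ℤ)^s * (u*v) by ring] at this
    exact (mul_dvd_mul_iff_left hp0).1 this
  rcases (Int.Prime.dvd_mul' (by exact_mod_cast hp) this) with h | h
  · exact hu h
  · exact h2 (by rw [pow_succ]; exact mul_dvd_mul_left _ h)

lemma EV_add {p : ℕ} (hp : p.Prime) {x y : ℤ} {s : ℕ}
    (hx : EV p x s) (hy : (p:ℤ)^(s+1) ∣ y) : EV p (x + y) s := by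
  obtain ⟨h1, h2⟩ := hx
  refine ⟨dvd_add h1 (dvd_trans (pow_dvd_pow _ (Nat.le_succ s)) hy), fun hc => ?_⟩
  have : (p:ℤ)^(s+1) ∣ x := by
    have := dvd_sub hc hy
    simpa using this
  exact h2 this

/-- L3: raising 1+y to a power prime to p preserves exact valuation (s ≥ 1). -/
lemma EV_pow_coprime {p : ℕ} (hp : p.Prime) {y : ℤ} {s : ℕ} (hs : 1 ≤ s)
    (h : EV p y s) {u : ℕ} (hu : ¬ p ∣ u) : EV p ((1+y)^u - 1) s := by
  obtain ⟨z, hz⟩ := pow_one_add_int y u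
  have hyd := h.1
  have : (1+y)^u - 1 = (u:ℤ)*y + y^2*z := by rw [hz]; ring
  rw [this]
  have huZ : ¬ (p:ℤ) ∣ (u:ℤ) := by exact_mod_cast hu
  refine EV_add hp (EV_mul_unit hp huZ h) ?_
  have : (p:ℤ)^(s+1) ∣ y^2 := by
    calc (p:ℤ)^(s+1) ∣ (p:ℤ)^(2*s) := pow_dvd_pow _ (by omega)
    _ = ((p:ℤ)^s)^2 := by rw [← pow_mul]; ring_nf
    _ ∣ y^2 := pow_dvd_pow_of_dvd hyd 2
  exact this.mul_right z

/-- L1: raising 1+y to the p-th power increases exact valuation by 1 (s ≥ 2). -/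
lemma EV_pow_p {p : ℕ} (hp : p.Prime) {y : ℤ} {s : ℕ} (hs : 2 ≤ s)
    (h : EV p y s) : EV p ((1+y)^p - 1) (s+1) := by
  obtain ⟨z, hz⟩ := pow_one_add_int y p
  have : (1+y)^p - 1 = (p:ℤ)*y + y^2*z := by rw [hz]; ring
  rw [this]
  have hp0 : (p:ℤ) ≠ 0 := by exact_mod_cast hp.ne_zero
  have hEV : EV p ((p:ℤ)*y) (s+1) := by
    constructor
    · rw [pow_succ']; exact mul_dvd_mul_left _ h.1
    · intro hc
      rw [show (p:ℤ)^(s+1+1) = p * (p:ℤ)^(s+1) by rw [pow_succ']] at hc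
      exact h.2 ((mul_dvd_mul_iff_left hp0).1 hc)
  refine EV_add hp hEV ?_
  have : (p:ℤ)^(s+2) ∣ y^2 := by
    calc (p:ℤ)^(s+2) ∣ (p:ℤ)^(2*s) := pow_dvd_pow _ (by omega)
    _ = ((p:ℤ)^s)^2 := by rw [← pow_mul]; ring_nf
    _ ∣ y^2 := pow_dvd_pow_of_dvd h.1 2
  exact this.mul_right z

/-- L4 -/
lemma EV_pow_general {p : ℕ} (hp : p.Prime) :
    ∀ (t : ℕ) {y : ℤ} {s : ℕ}, 2 ≤ s → EV p y s → ∀ u : ℕ, ¬ p ∣ u →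
      EV p ((1+y)^(p^t * u) - 1) (s+t) := by
  intro t
  induction t with
  | zero => intro y s hs h u hu; simpa using EV_pow_coprime hp (by omega) h hu
  | succ t ih =>
    intro y s hs h u hu
    have h1 : EV p ((1+y)^p - 1) (s+1) := EV_pow_p hp hs h
    have key : (1+y)^(p^(t+1) * u) = (1 + ((1+y)^p - 1))^(p^t * u) := by
      rw [show (1 + ((1+y)^p - 1)) = (1+y)^p by ring, ← pow_mul,
        show p * (p^t * u) = p^(t+1) * u by rw [pow_succ]; ring]
    rw [key]
    have := ih (by omega) h1 u hu
    rw [show s + (t+1) = s + 1 + t by omega]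
    exact this

lemma keyP {g p : ℕ} (hg : 2 ≤ g) (hp : p.Prime) (hpg : ¬ p ∣ g) :
    ∃ T : ℕ, ∀ n k : ℕ, 0 < n → g ^ n ≡ 1 [MOD p ^ k] → k ≤ T + n.factorization p := by
  have hcp : Nat.Coprime g p := ((hp.coprime_iff_not_dvd).2 hpg).symm
  have hc2 : Nat.Coprime g (p^2) := hcp.pow_right 2
  have hp2pos : 0 < p^2 := pow_pos hp.pos 2
  set D := ordg g (p^2) with hDdef
  have hDpos : 0 < D := ordg_pos hp2pos hc2
  have hmod : g ^ D ≡ 1 [MOD p^2] := ordg_modeq hp2pos hc2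
  set N : ℕ := g ^ D - 1 with hNdef
  have hgD : 2 ≤ g ^ D := le_trans hg (Nat.le_self_pow (by omega) g)
  have hNpos : 0 < N := by omega
  have hp2N : p^2 ∣ N := (Nat.modEq_iff_dvd' (by omega)).1 hmod.symm
  set s0 := N.factorization p with hs0def
  have hs0 : 2 ≤ s0 := (hp.pow_dvd_iff_le_factorization hNpos.ne').1 hp2N
  have hEV : EV p ((N:ℤ)) s0 := by
    constructor
    · exact_mod_cast Int.natCast_dvd_natCast.2 (Nat.ordProj_dvd N p)
    · intro hc
      exact Nat.pow_succ_factorization_not_dvd hNpos.ne' hp (Int.natCast_dvd_natCast.1 (by exact_mod_cast hc))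
  refine ⟨s0, fun n k hn hmk => ?_⟩
  by_cases hk2 : k ≤ 2
  · omega
  · have hmk2 : g ^ n ≡ 1 [MOD p^2] := hmk.of_dvd (pow_dvd_pow p (by omega))
    have hDn : D ∣ n := ordg_dvd hp2pos hc2 hmk2
    obtain ⟨m, hm⟩ := hDn
    have hmpos : 0 < m := by
      rcases Nat.eq_zero_or_pos m with rfl | h; · omega
      · exact h
    set t := m.factorization p with htdef
    set u := m / p ^ t with hudef
    have hmu : m = p ^ t * u := (Nat.ordProj_mul_ordCompl_eq_self m p).symm
    have hu : ¬ p ∣ u := Nat.not_dvd_ordCompl hp hmpos.ne'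
    have hgn : (g:ℤ)^n - 1 = (1 + (N:ℤ))^(p^t * u) - 1 := by
      have h1 : (1 + (N:ℤ)) = (g:ℤ)^D := by
        have : (N:ℤ) = (g:ℤ)^D - 1 := by
          rw [hNdef]; push_cast [Nat.cast_sub (by omega : 1 ≤ g^D)]; ring
        rw [this]; ring
      rw [h1, ← pow_mul, ← hmu, ← hm]
    have hEV2 : EV p ((g:ℤ)^n - 1) (s0 + t) := by
      rw [hgn]; exact EV_pow_general hp t hs0 hEV u hu
    have hdvd : ((p:ℤ))^k ∣ (g:ℤ)^n - 1 := by
      have hgn1 : 1 ≤ g^n := Nat.one_le_pow _ _ (by omega)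
      have h1 : (p^k : ℕ) ∣ g^n - 1 := (Nat.modEq_iff_dvd' hgn1).1 hmk.symm
      have h2 : ((g^n - 1 : ℕ) : ℤ) = (g:ℤ)^n - 1 := by
        push_cast [Nat.cast_sub hgn1]; ring
      have := Int.natCast_dvd_natCast.2 h1
      rw [h2] at this; exact_mod_cast this
    have hkle : k ≤ s0 + t := by
      by_contra hlt
      exact hEV2.2 (dvd_trans (pow_dvd_pow _ (by omega)) hdvd)
    have htle : t ≤ n.factorization p := by
      have hfm : n.factorization p = D.factorization p + m.factorization p := by
        rw [hm, Nat.factorization_mul hDpos.ne' hmpos.ne', Finsupp.add_apply]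
      omega
    omega

section StructureSec
variable {g b : ℕ} (hg : 2 ≤ g) (hb : 1 < b) (hbg : Nat.Coprime b g)

lemma coprime_g_bpow (hbg : Nat.Coprime b g) (k : ℕ) : Nat.Coprime g (b^k) :=
  (hbg.symm).pow_right k

lemma bpow_pos (hb : 1 < b) (k : ℕ) : 0 < b ^ k := pow_pos (by omega) k

lemma d_pos (hb : 1 < b) (hbg : Nat.Coprime b g) (k : ℕ) : 0 < ordg g (b^k) :=
  ordg_pos (bpow_pos hb k) (coprime_g_bpow hbg k)

/-- A2 : step divisibility. -/
lemma d_succ_dvd (hb : 1 < b) (hbg : Nat.Coprime b g) {k : ℕ} (hk : 1 ≤ k) :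
    ordg g (b^(k+1)) ∣ b * ordg g (b^k) := by
  set d := ordg g (b^k) with hd
  have hdpos : 0 < d := d_pos hb hbg k
  apply ordg_dvd (bpow_pos hb (k+1)) (coprime_g_bpow hbg (k+1))
  -- show g ^ (b * d) ≡ 1 [MOD b^(k+1)] via ℤ
  rw [Nat.modEq_iff_dvd]
  rw [dvd_sub_comm]
  have h1 : ((b:ℤ))^k ∣ (g:ℤ)^d - 1 := by
    have := (Nat.modEq_iff_dvd (n := b^k)).1 (ordg_modeq (bpow_pos hb k) (coprime_g_bpow hbg k))
    push_cast at this
    exact dvd_sub_comm.mp this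
  set y : ℤ := (g:ℤ)^d - 1 with hy
  have hgd : (g:ℤ)^d = 1 + y := by rw [hy]; ring
  obtain ⟨z, hz⟩ := pow_one_add_int y b
  have hkey : ((g:ℤ))^(b*d) - 1 = (b:ℤ)*y + y^2*z := by
    rw [mul_comm b d, pow_mul, hgd, hz]; ring
  push_cast
  rw [hkey]
  apply dvd_add
  · rw [pow_succ, mul_comm ((b:ℤ)^k) (b:ℤ)]
    exact mul_dvd_mul_left _ h1
  · apply Dvd.dvd.mul_right
    calc ((b:ℤ))^(k+1) ∣ ((b:ℤ))^(2*k) := pow_dvd_pow _ (by omega)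
      _ = ((b:ℤ)^k)^2 := by rw [← pow_mul]; ring_nf
      _ ∣ y^2 := pow_dvd_pow_of_dvd h1 2

lemma d_dvd_pow (hb : 1 < b) (hbg : Nat.Coprime b g) :
    ∀ k : ℕ, ordg g (b^(k+1)) ∣ b^k * ordg g (b^1) := by
  intro k
  induction k with
  | zero => simp
  | succ k ih =>
    calc ordg g (b^(k+1+1)) ∣ b * ordg g (b^(k+1)) := d_succ_dvd hb hbg (by omega)
      _ ∣ b * (b^k * ordg g (b^1)) := mul_dvd_mul_left b ih
      _ = b^(k+1) * ordg g (b^1) := by ring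

lemma d_mono_dvd (hb : 1 < b) (hbg : Nat.Coprime b g) {k l : ℕ} (h : k ≤ l) :
    ordg g (b^k) ∣ ordg g (b^l) :=
  ordg_dvd_of_dvd (bpow_pos hb l) (coprime_g_bpow hbg l) (pow_dvd_pow b h)
    (bpow_pos hb k) (coprime_g_bpow hbg k)

lemma exists_B (hg : 2 ≤ g) (hb : 1 < b) (hbg : Nat.Coprime b g) :
    ∃ B : ℕ, 0 < B ∧ ∀ k, b^k ∣ B * ordg g (b^k) := by
  have hkey : ∀ p : {x // x ∈ b.primeFactors},
      ∃ T : ℕ, ∀ n k : ℕ, 0 < n → g ^ n ≡ 1 [MOD (p:ℕ) ^ k] → k ≤ T + n.factorization p := by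
    rintro ⟨p, hp⟩
    have hprime := Nat.prime_of_mem_primeFactors hp
    have hpb : p ∣ b := Nat.dvd_of_mem_primeFactors hp
    have hpg : ¬ p ∣ g := by
      intro hdvd
      have : p ∣ Nat.gcd b g := Nat.dvd_gcd hpb hdvd
      rw [hbg] at this
      exact Nat.Prime.one_lt hprime |>.ne' (Nat.le_antisymm (Nat.le_of_dvd one_pos this) hprime.one_lt.le |>.symm ▸ rfl)
    exact keyP hg hprime hpg
  choose T hT using hkey
  refine ⟨∏ p ∈ b.primeFactors.attach, (p:ℕ) ^ (T p), Finset.prod_pos (fun p _ => pow_pos (Nat.prime_of_mem_primeFactors p.2).pos _), fun k => ?_⟩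
  set B := ∏ p ∈ b.primeFactors.attach, (p:ℕ) ^ (T p) with hBdef
  have hBpos : 0 < B := Finset.prod_pos (fun p _ => pow_pos (Nat.prime_of_mem_primeFactors p.2).pos _)
  have hdk : 0 < ordg g (b^k) := d_pos hb hbg k
  rw [← Nat.factorization_le_iff_dvd (pow_pos (by omega : 0 < b) k).ne' (Nat.mul_pos hBpos hdk).ne']
  intro q
  simp only [Nat.factorization_pow, Finsupp.smul_apply, smul_eq_mul]
  by_cases hq : q ∈ b.primeFactors
  · have hqprime := Nat.prime_of_mem_primeFactors hq
    set e := b.factorization q with hedef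
    have hqk : g ^ (ordg g (b^k)) ≡ 1 [MOD q ^ (k * e)] := by
      apply (ordg_modeq (bpow_pos hb k) (coprime_g_bpow hbg k)).of_dvd
      calc q ^ (k * e) = (q^e)^k := by rw [← pow_mul, mul_comm]
        _ ∣ b^k := pow_dvd_pow_of_dvd (Nat.ordProj_dvd b q) k
    have h1 : k * e ≤ T ⟨q, hq⟩ + (ordg g (b^k)).factorization q :=
      hT ⟨q, hq⟩ _ _ hdk hqk
    have h2 : T ⟨q, hq⟩ ≤ B.factorization q := by
      apply (hqprime.pow_dvd_iff_le_factorization hBpos.ne').1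
      exact Finset.dvd_prod_of_mem _ (Finset.mem_attach _ ⟨q, hq⟩)
    have h3 : (B * ordg g (b^k)).factorization q
        = B.factorization q + (ordg g (b^k)).factorization q := by
      rw [Nat.factorization_mul hBpos.ne' hdk.ne', Finsupp.add_apply]
    omega
  · have : b.factorization q = 0 := by
      by_contra h
      exact hq (Nat.support_factorization b ▸ Finsupp.mem_support_iff.2 h)
    simp [this]

lemma exists_structure (hg : 2 ≤ g) (hb : 1 < b) (hbg : Nat.Coprime b g) :
    ∃ c : ℕ, 1 ≤ c ∧ ∀ k, c ≤ k → ordg g (b^k) = b^(k-c) * ordg g (b^c) := by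
  obtain ⟨B, hBpos, hB⟩ := exists_B hg hb hbg
  set d : ℕ → ℕ := fun k => ordg g (b^k) with hddef
  have hdpos : ∀ k, 0 < d k := fun k => d_pos hb hbg k
  have hdd : ∀ k, d (k+1) ∣ b^k * d 1 := d_dvd_pow hb hbg
  set Q : ℕ → ℕ := fun k => b^k * d 1 / d (k+1) with hQdef
  have hQ : ∀ k, Q k * d (k+1) = b^k * d 1 := fun k => Nat.div_mul_cancel (hdd k)
  have hQpos : ∀ k, 0 < Q k := by
    intro k
    rcases Nat.eq_zero_or_pos (Q k) with h | h
    · exfalso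
      have := hQ k
      rw [h, zero_mul] at this
      have : 0 < b^k * d 1 := Nat.mul_pos (bpow_pos hb k) (hdpos 1)
      omega
    · exact h
  have hQmono : ∀ k, Q k ≤ Q (k+1) := by
    intro k
    obtain ⟨r, hr⟩ := d_succ_dvd hb hbg (by omega : 1 ≤ k+1)
    have h1 : Q (k+1) * d (k+2) = Q k * d (k+2) * r := by
      have : Q (k+1) * d (k+2) = b^(k+1) * d 1 := hQ (k+1)
      rw [this]
      calc b^(k+1) * d 1 = b * (b^k * d 1) := by ring
        _ = b * (Q k * d (k+1)) := by rw [hQ k]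
        _ = Q k * (b * d (k+1)) := by ring
        _ = Q k * (d (k+2) * r) := by rw [← hr]
        _ = Q k * d (k+2) * r := by ring
    have h2 : Q (k+1) = Q k * r := by
      have hd2 : 0 < d (k+2) := hdpos (k+2)
      have := h1
      rw [show Q k * d (k+2) * r = Q k * r * d (k+2) by ring] at this
      exact Nat.eq_of_mul_eq_mul_right hd2 this
    have hrpos : 0 < r := by
      rcases Nat.eq_zero_or_pos r with h | h
      · exfalso; rw [h, mul_zero] at h2; exact (hQpos (k+1)).ne' h2
      · exact h
    rw [h2]
    exact Nat.le_mul_of_pos_right _ hrpos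
  have hQbd : ∀ k, Q k ≤ B * d 1 := by
    intro k
    have h1 : b^k ∣ B * d (k+1) := dvd_trans (pow_dvd_pow b (Nat.le_succ k)) (hB (k+1))
    have h2 : Q k * d (k+1) ∣ B * d 1 * d (k+1) := by
      rw [hQ k]
      calc b^k * d 1 ∣ (B * d (k+1)) * d 1 := mul_dvd_mul_right h1 _
        _ = B * d 1 * d (k+1) := by ring
    have h3 : Q k ∣ B * d 1 := (Nat.mul_dvd_mul_iff_right (hdpos (k+1))).1 h2
    exact Nat.le_of_dvd (Nat.mul_pos hBpos (hdpos 1)) h3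
  have hmono : Monotone Q := monotone_nat_of_le_succ hQmono
  have hbdd : BddAbove (Set.range Q) := ⟨B * d 1, fun x ⟨k, hk⟩ => hk ▸ hQbd k⟩
  have hmem : sSup (Set.range Q) ∈ Set.range Q := Nat.sSup_mem ⟨Q 0, 0, rfl⟩ hbdd
  obtain ⟨c0, hc0⟩ := hmem
  have hconst : ∀ k, c0 ≤ k → Q k = Q c0 := by
    intro k hk
    exact le_antisymm (hc0 ▸ le_csSup hbdd ⟨k, rfl⟩) (hmono hk)
  refine ⟨c0 + 1, by omega, fun k hk => ?_⟩
  -- k ≥ c0 + 1; apply cross-multiplication at k-1 ≥ c0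
  have hk1 : k - 1 ≥ c0 := by omega
  have hkeq : k = (k-1) + 1 := by omega
  have hcross : b^(k-1) * d (c0+1) = b^c0 * d k := by
    have e1 : Q (k-1) * d ((k-1)+1) = b^(k-1) * d 1 := hQ (k-1)
    have e2 : Q c0 * d (c0+1) = b^c0 * d 1 := hQ c0
    have e3 : Q (k-1) = Q c0 := hconst (k-1) hk1
    have e4 : (b^(k-1) * d 1) * d (c0+1) = (b^c0 * d 1) * d k := by
      rw [← e1, ← e2, e3, ← hkeq]; ring
    have e5 : d 1 * (b^(k-1) * d (c0+1)) = d 1 * (b^c0 * d k) := by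
      calc d 1 * (b^(k-1) * d (c0+1)) = (b^(k-1) * d 1) * d (c0+1) := by ring
        _ = (b^c0 * d 1) * d k := e4
        _ = d 1 * (b^c0 * d k) := by ring
    exact Nat.eq_of_mul_eq_mul_left (hdpos 1) e5
  have hsplit : b^(k-1) = b^c0 * b^(k-(c0+1)) := by
    rw [← pow_add]
    congr 1
    omega
  rw [hsplit] at hcross
  have : b^c0 * (b^(k-(c0+1)) * d (c0+1)) = b^c0 * d k := by rw [← hcross]; ring
  have := Nat.eq_of_mul_eq_mul_left (bpow_pos hb c0) this
  exact this.symm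

end StructureSec

/-! ### Counting helpers -/

lemma div_eq_iff_nat {E n s : ℕ} (hE : 0 < E) : n / E = s ↔ s*E ≤ n ∧ n < (s+1)*E := by
  constructor
  · intro h
    constructor
    · rw [← h]; exact Nat.div_mul_le_self n E
    · rw [← h]
      calc n < E*(n/E) + E := by
            have := Nat.mod_lt n hE
            have := Nat.div_add_mod n E
            omega
        _ = (n/E + 1)*E := by ring
  · rintro ⟨h1, h2⟩
    have ha : s ≤ n / E := (Nat.le_div_iff_mul_le hE).2 h1
    have h2' : n < E*(s+1) := by rw [mul_comm]; exact h2
    have hb : n / E < s + 1 := Nat.div_lt_of_lt_mul h2'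
    omega

lemma count_AP (M N ρ : ℕ) (hM : 0 < M) (hρ : ρ < M) (P : ℕ → Prop) [DecidablePred P] :
    ((Finset.range (M*N)).filter (fun r => r % M = ρ ∧ P r)).card
      = ((Finset.range N).filter (fun t => P (ρ + M*t))).card := by
  apply Finset.card_bij' (fun r _ => r / M) (fun t _ => ρ + M*t)
  · intro r hr
    simp only [Finset.mem_filter, Finset.mem_range] at hr ⊢
    obtain ⟨hrange, hmod, hP⟩ := hr
    refine ⟨?_, ?_⟩
    · exact Nat.div_lt_of_lt_mul hrange
    · rw [show ρ + M * (r / M) = r % M + M * (r/M) by rw [hmod]]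
      rw [Nat.mod_add_div]
      exact hP
  · intro t ht
    simp only [Finset.mem_filter, Finset.mem_range] at ht ⊢
    obtain ⟨hrange, hP⟩ := ht
    refine ⟨?_, ?_, hP⟩
    · calc ρ + M*t < M + M*t := by omega
        _ = M*(t+1) := by ring
        _ ≤ M*N := Nat.mul_le_mul_left M (by omega)
    · rw [Nat.add_mul_mod_self_left, Nat.mod_eq_of_lt hρ]
  · intro r hr
    simp only [Finset.mem_filter, Finset.mem_range] at hr
    obtain ⟨_, hmod, _⟩ := hr
    rw [show ρ + M * (r / M) = r % M + M * (r/M) by rw [hmod], Nat.mod_add_div]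
  · intro t ht
    rw [Nat.add_mul_div_left _ _ hM, Nat.div_eq_of_lt hρ, zero_add]

/-- ceiling division for integers (divisor positive) -/
def cdiv (x E : ℤ) : ℤ := (x + E - 1) / E

lemma cdiv_le_iff {x E t : ℤ} (hE : 0 < E) : cdiv x E ≤ t ↔ x ≤ t*E := by
  unfold cdiv
  rw [show (x + E - 1) / E ≤ t ↔ (x + E - 1)/E < t + 1 by omega,
    Int.ediv_lt_iff_lt_mul hE]
  have : (t+1)*E = t*E + E := by ring
  omega

lemma lt_cdiv_iff {x E t : ℤ} (hE : 0 < E) : t < cdiv x E ↔ t*E < x := by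
  rw [← not_le, ← not_le, cdiv_le_iff hE]

lemma cdiv_add_bounds {x n E : ℤ} (hE : 0 < E) (hn : 0 ≤ n) :
    cdiv x E + n/E ≤ cdiv (x+n) E ∧ cdiv (x+n) E ≤ cdiv x E + n/E + 1 := by
  have hmod := Int.emod_nonneg n (by omega : E ≠ 0)
  have hmodlt := Int.emod_lt_of_pos n hE
  have hdm : n % E + E * (n/E) = n := Int.emod_add_mul_ediv n E
  have key : cdiv (x+n) E = (x + n % E + E - 1)/E + n/E := by
    unfold cdiv
    have h2 : x + n + E - 1 = (x + n % E + E - 1) + (n/E)*E := by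
      have h := mul_comm (n/E) E
      omega
    rw [h2]
    rw [Int.add_mul_ediv_right _ _ (by omega : E ≠ 0)]
  constructor
  · rw [key]
    have : (x + E - 1)/E ≤ (x + n % E + E - 1)/E :=
      Int.ediv_le_ediv hE (by omega)
    unfold cdiv
    omega
  · rw [key]
    have : (x + n % E + E - 1)/E ≤ (x + E - 1 + 1*E)/E :=
      Int.ediv_le_ediv hE (by omega)
    rw [Int.add_mul_ediv_right _ _ (by omega : E ≠ 0)] at this
    unfold cdiv
    omega

/-- `cg g b` is the least `c ≥ 1` such that `ord_g(b^{c+t}) = b^t·ord_g(b^c)` for all `t ≥ 1`. -/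
noncomputable def cg (g b : ℕ) : ℕ :=
  sInf {c : ℕ | 0 < c ∧ ∀ t : ℕ, 0 < t → ordg g (b ^ (c + t)) = b ^ t * ordg g (b ^ c)}

/-- `nu g b a j k s` is the absolute frequency of the `j`-word `s` in the enlarged
repetend of `a/b^k`. -/
noncomputable def nu (g b a j k s : ℕ) : ℕ :=
  ((Finset.Icc j (ordg g (b ^ k) + j - 1)).filter
    (fun i => (a * g ^ i / b ^ k) % g ^ j = s)).card

section CountSec

variable {g b a : ℕ}

lemma orbit_inj (hb : 1 < b) (hbg : Nat.Coprime b g) (hab : Nat.Coprime a b) (k : ℕ) :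
    ∀ m, m < ordg g (b^k) → ∀ m', m' < ordg g (b^k) →
      a * g^m % b^k = a * g^m' % b^k → m = m' := by
  have key : ∀ m m', m ≤ m' → m' < ordg g (b^k) →
      a * g^m % b^k = a * g^m' % b^k → m = m' := by
    intro m m' hle hlt heq
    have hmod : a * g^m ≡ a * g^m' [MOD b^k] := heq
    have hca : Nat.gcd (b^k) a = 1 := (hab.symm.pow_left k).gcd_eq_one
    have h1 : g^m ≡ g^m' [MOD b^k] := hmod.cancel_left_of_coprime hca
    have h2 : g^m * 1 ≡ g^m * g^(m'-m) [MOD b^k] := by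
      rw [mul_one, ← pow_add, show m + (m'-m) = m' by omega]
      exact h1
    have hcg : Nat.gcd (b^k) (g^m) = 1 :=
      ((coprime_g_bpow hbg k).symm.pow_right m).gcd_eq_one
    have h3 : (1:ℕ) ≡ g^(m'-m) [MOD b^k] := h2.cancel_left_of_coprime hcg
    by_contra hne
    have hpos : 0 < m' - m := by omega
    have := ordg_le hpos h3.symm
    omega
  intro m hm m' hm' heq
  rcases le_total m m' with h | h
  · exact key m m' h hm' heq
  · exact (key m' m h hm heq.symm).symm

lemma word_eq (hb : 1 < b) (hg : 2 ≤ g) (j k m s : ℕ) :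
    ((a * g^(m+j) / b^k) % g^j = s) ↔ (g^j * (a * g^m % b^k) / b^k = s) := by
  have hbk : 0 < b^k := pow_pos (by omega) k
  have hgj : 0 < g^j := pow_pos (by omega) j
  set q := a*g^m / b^k with hq
  set r := a*g^m % b^k with hrdef
  have hr : r < b^k := Nat.mod_lt _ hbk
  have h1 : a * g^(m+j) = r * g^j + (q * g^j) * b^k := by
    rw [pow_add]
    calc a*(g^m*g^j) = (a*g^m)*g^j := by ring
      _ = (b^k * q + r)*g^j := by rw [Nat.div_add_mod]
      _ = r*g^j + (q*g^j)*b^k := by ring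
  have h2 : a * g^(m+j) / b^k = r*g^j/b^k + q*g^j := by
    rw [h1, Nat.add_mul_div_right _ _ hbk]
  have h3 : r * g^j / b^k < g^j :=
    Nat.div_lt_of_lt_mul ((Nat.mul_lt_mul_right hgj).2 hr)
  rw [h2, Nat.add_mul_mod_self_right, Nat.mod_eq_of_lt h3, mul_comm]

lemma nu_eq (hb : 1 < b) (hg : 2 ≤ g) (hbg : Nat.Coprime b g) {j : ℕ} (hj : 1 ≤ j) (k s : ℕ) :
    nu g b a j k s = ((Finset.range (ordg g (b^k))).filter
      (fun m => g^j * (a * g^m % b^k) / b^k = s)).card := by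
  have hd : 0 < ordg g (b^k) := d_pos hb hbg k
  unfold nu
  apply Finset.card_bij' (fun i _ => i - j) (fun m _ => m + j)
  · intro i hi
    simp only [Finset.mem_filter, Finset.mem_Icc, Finset.mem_range] at hi ⊢
    obtain ⟨⟨h1, h2⟩, h3⟩ := hi
    refine ⟨by omega, ?_⟩
    rw [← word_eq hb hg j k (i-j) s, show i - j + j = i by omega]
    exact h3
  · intro m hm
    simp only [Finset.mem_filter, Finset.mem_Icc, Finset.mem_range] at hm ⊢
    obtain ⟨h1, h2⟩ := hm
    refine ⟨⟨by omega, by omega⟩, ?_⟩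
    rw [word_eq hb hg j k m s]
    exact h2
  · intro i hi
    simp only [Finset.mem_filter, Finset.mem_Icc] at hi
    omega
  · intro m hm
    omega

lemma count_mem (M N : ℕ) (hM : 0 < M) (R : Finset ℕ) (hR : ∀ ρ ∈ R, ρ < M) :
    ((Finset.range (M*N)).filter (fun r => r % M ∈ R)).card = R.card * N := by
  rw [Finset.card_eq_sum_card_fiberwise (f := fun r => r % M) (t := R)
    (s := (Finset.range (M*N)).filter (fun r => r % M ∈ R)) (fun r hr => (Finset.mem_filter.1 hr).2)]
  have hfib : ∀ ρ ∈ R, (((Finset.range (M*N)).filter (fun r => r % M ∈ R)).filter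
      (fun r => r % M = ρ)).card = N := by
    intro ρ hρ
    have h1 : ((Finset.range (M*N)).filter (fun r => r % M ∈ R)).filter (fun r => r % M = ρ)
        = (Finset.range (M*N)).filter (fun r => r % M = ρ ∧ True) := by
      rw [Finset.filter_filter]
      apply Finset.filter_congr
      intro r _
      constructor
      · rintro ⟨_, h⟩; exact ⟨h, trivial⟩
      · rintro ⟨h, _⟩; exact ⟨h ▸ hρ, h⟩
    rw [h1, count_AP M N ρ hM (hR ρ hρ) (fun _ => True)]
    simp
  rw [Finset.sum_congr rfl hfib, Finset.sum_const, smul_eq_mul]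

/-- The set of residues of the orbit at level `c`. -/
noncomputable def Rc (g b a c : ℕ) : Finset ℕ :=
  (Finset.range (ordg g (b^c))).image (fun m => a * g^m % b^c)

lemma Rc_card (hb : 1 < b) (hbg : Nat.Coprime b g) (hab : Nat.Coprime a b) (c : ℕ) :
    (Rc g b a c).card = ordg g (b^c) := by
  rw [Rc, Finset.card_image_of_injOn, Finset.card_range]
  intro m hm m' hm' h
  simp only [Finset.coe_range, Set.mem_Iio] at hm hm'
  exact orbit_inj hb hbg hab c m hm m' hm' h

lemma Rc_lt (hb : 1 < b) {c ρ : ℕ} (hρ : ρ ∈ Rc g b a c) : ρ < b^c := by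
  obtain ⟨m, _, rfl⟩ := Finset.mem_image.1 hρ
  exact Nat.mod_lt _ (bpow_pos hb c)

lemma orbit_mem_Rc (hb : 1 < b) (hbg : Nat.Coprime b g) {c k : ℕ} (hkc : c ≤ k) (m : ℕ) :
    (a * g^m % b^k) % b^c ∈ Rc g b a c := by
  have h1 : (a*g^m % b^k) % b^c = a*g^m % b^c := Nat.mod_mod_of_dvd _ (pow_dvd_pow b hkc)
  rw [h1]
  set dc := ordg g (b^c) with hdc
  have hdcpos : 0 < dc := d_pos hb hbg c
  refine Finset.mem_image.2 ⟨m % dc, Finset.mem_range.2 (Nat.mod_lt _ hdcpos), ?_⟩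
  have hmod : g^m ≡ g^(m % dc) [MOD b^c] := by
    conv_lhs => rw [show m = dc*(m/dc) + m % dc from (Nat.div_add_mod m dc).symm]
    rw [pow_add, pow_mul]
    calc (g^dc)^(m/dc) * g^(m % dc) ≡ 1^(m/dc) * g^(m % dc) [MOD b^c] :=
          Nat.ModEq.mul_right _ ((ordg_modeq (bpow_pos hb c) (coprime_g_bpow hbg c)).pow _)
      _ = g^(m % dc) := by rw [one_pow, one_mul]
  exact (Nat.ModEq.mul_left a hmod).symm

lemma orbit_eq (hb : 1 < b) (hbg : Nat.Coprime b g) (hab : Nat.Coprime a b)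
    {c k : ℕ} (hkc : c ≤ k)
    (hstruct : ordg g (b^k) = b^(k-c) * ordg g (b^c)) :
    (Finset.range (ordg g (b^k))).image (fun m => a * g^m % b^k)
      = (Finset.range (b^k)).filter (fun r => r % b^c ∈ Rc g b a c) := by
  apply Finset.eq_of_subset_of_card_le
  · intro r hr
    obtain ⟨m, _, rfl⟩ := Finset.mem_image.1 hr
    exact Finset.mem_filter.2 ⟨Finset.mem_range.2 (Nat.mod_lt _ (bpow_pos hb k)),
      orbit_mem_Rc hb hbg hkc m⟩
  · have hL : ((Finset.range (ordg g (b^k))).image (fun m => a * g^m % b^k)).card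
        = ordg g (b^k) := by
      rw [Finset.card_image_of_injOn, Finset.card_range]
      intro m hm m' hm' h
      simp only [Finset.coe_range, Set.mem_Iio] at hm hm'
      exact orbit_inj hb hbg hab k m hm m' hm' h
    have hsplit : b^k = b^c * b^(k-c) := by
      rw [← pow_add]; congr 1; omega
    have hR : ((Finset.range (b^k)).filter (fun r => r % b^c ∈ Rc g b a c)).card
        = (Rc g b a c).card * b^(k-c) := by
      rw [hsplit]
      exact count_mem (b^c) (b^(k-c)) (bpow_pos hb c) _ (fun ρ hρ => Rc_lt hb hρ)
    rw [hL, hR, Rc_card hb hbg hab, hstruct, mul_comm]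

lemma nu_sum (hb : 1 < b) (hg : 2 ≤ g) (hbg : Nat.Coprime b g) (hab : Nat.Coprime a b)
    {j : ℕ} (hj : 1 ≤ j) {c k : ℕ} (hkc : c ≤ k)
    (hstruct : ordg g (b^k) = b^(k-c) * ordg g (b^c)) (s : ℕ) :
    nu g b a j k s = ∑ ρ ∈ Rc g b a c,
      ((Finset.range (b^k)).filter (fun r => r % b^c = ρ ∧ g^j * r / b^k = s)).card := by
  rw [nu_eq hb hg hbg hj k s]
  set f : ℕ → ℕ := fun m => a * g^m % b^k with hf
  set Q : ℕ → Prop := fun r => g^j * r / b^k = s with hQ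
  have hinj : Set.InjOn f ((Finset.range (ordg g (b^k))).filter (fun m => Q (f m))) := by
    intro m hm m' hm' h
    simp only [Finset.coe_filter, Set.mem_setOf_eq, Finset.mem_range] at hm hm'
    exact orbit_inj hb hbg hab k m hm.1 m' hm'.1 h
  have himg : ((Finset.range (ordg g (b^k))).filter (fun m => Q (f m))).image f
      = ((Finset.range (ordg g (b^k))).image f).filter Q := by
    ext r
    simp only [Finset.mem_image, Finset.mem_filter, Finset.mem_range]
    constructor
    · rintro ⟨m, ⟨hm, hQm⟩, rfl⟩
      exact ⟨⟨m, hm, rfl⟩, hQm⟩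
    · rintro ⟨⟨m, hm, rfl⟩, hQm⟩
      exact ⟨m, ⟨hm, hQm⟩, rfl⟩
  have hcard1 : ((Finset.range (ordg g (b^k))).filter (fun m => Q (f m))).card
      = (((Finset.range (ordg g (b^k))).image f).filter Q).card := by
    rw [← himg, Finset.card_image_of_injOn hinj]
  rw [hcard1, orbit_eq hb hbg hab hkc hstruct, Finset.filter_filter]
  rw [Finset.card_eq_sum_card_fiberwise (f := fun r => r % b^c) (t := Rc g b a c)
    (fun r hr => (Finset.mem_filter.1 hr).2.1)]
  apply Finset.sum_congr rfl
  intro ρ hρ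
  congr 1
  rw [Finset.filter_filter]
  apply Finset.filter_congr
  intro r _
  constructor
  · rintro ⟨⟨_, hQr⟩, hmod⟩; exact ⟨hmod, hQr⟩
  · rintro ⟨hmod, hQr⟩; exact ⟨⟨hmod ▸ hρ, hQr⟩, hmod⟩

lemma F_int (hb : 1 < b) (hg : 2 ≤ g) {j c k : ℕ} (hkc : c ≤ k)
    {ρ s : ℕ} (hρ : ρ < b^c) (hs : s < g^j) :
    (((Finset.range (b^k)).filter (fun r => r % b^c = ρ ∧ g^j * r / b^k = s)).card : ℤ)
      = cdiv ((s:ℤ)*(b:ℤ)^k - (g:ℤ)^j*ρ + (b:ℤ)^k) ((g:ℤ)^j*(b:ℤ)^c)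
        - cdiv ((s:ℤ)*(b:ℤ)^k - (g:ℤ)^j*ρ) ((g:ℤ)^j*(b:ℤ)^c) := by
  have hbpos : (1:ℕ) ≤ b := by omega
  have hsplit : b^k = b^c * b^(k-c) := by rw [← pow_add]; congr 1; omega
  have h0 : Finset.range (b^k) = Finset.range (b^c * b^(k-c)) := by rw [← hsplit]
  rw [h0, count_AP (b^c) (b^(k-c)) ρ (bpow_pos hb c) hρ (fun r => g^j * r / b^k = s)]
  set E : ℤ := (g:ℤ)^j*(b:ℤ)^c with hEdef
  have hE : 0 < E := by positivity
  set x : ℤ := (s:ℤ)*(b:ℤ)^k - (g:ℤ)^j*ρ with hxdef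
  set n0 : ℤ := ((b:ℤ))^k with hn0def
  have hn0 : 0 < n0 := by positivity
  set L : ℤ := cdiv x E with hLdef
  set U : ℤ := cdiv (x + n0) E with hUdef
  have hLU : L ≤ U := by
    have h1 := (cdiv_add_bounds (x := x) hE hn0.le).1
    have h2 : 0 ≤ n0/E := Int.ediv_nonneg hn0.le hE.le
    omega
  have hgρE : (g:ℤ)^j*(ρ:ℤ) < E := by
    have h1 : (ρ:ℤ) < (b:ℤ)^c := by exact_mod_cast hρ
    have h2 : (0:ℤ) < (g:ℤ)^j := by positivity
    rw [hEdef]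
    exact (mul_lt_mul_iff_right₀ h2).2 h1
  have hL0 : 0 ≤ L := by
    by_contra h
    push_neg at h
    have h1 : L ≤ -1 := by omega
    rw [hLdef, cdiv_le_iff hE] at h1
    have h2 : (0:ℤ) ≤ (s:ℤ)*(b:ℤ)^k := by positivity
    have : x ≤ -E := by linarith [h1]
    rw [hxdef] at this
    linarith
  have hcard : ((Finset.range (b^(k-c))).filter (fun t => g^j * (ρ + b^c * t) / b^k = s)).card
      = (Finset.Ico L U).card := by
    refine Finset.card_bij' (fun t _ => (t:ℤ)) (fun z _ => z.toNat) ?_ ?_ ?_ ?_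
    · intro t ht
      simp only [Finset.mem_filter, Finset.mem_range] at ht
      obtain ⟨htr, hdiv⟩ := ht
      rw [div_eq_iff_nat (bpow_pos hb k)] at hdiv
      obtain ⟨hd1, hd2⟩ := hdiv
      have c1 : (s:ℤ)*(b:ℤ)^k ≤ (g:ℤ)^j*((ρ:ℤ)+(b:ℤ)^c*(t:ℤ)) := by exact_mod_cast hd1
      have c2 : (g:ℤ)^j*((ρ:ℤ)+(b:ℤ)^c*(t:ℤ)) < ((s:ℤ)+1)*(b:ℤ)^k := by exact_mod_cast hd2
      have e1 : (g:ℤ)^j*((ρ:ℤ)+(b:ℤ)^c*(t:ℤ)) = (g:ℤ)^j*(ρ:ℤ) + ((g:ℤ)^j*(b:ℤ)^c)*(t:ℤ) := by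
        ring
      refine Finset.mem_Ico.2 ⟨?_, ?_⟩
      · show L ≤ ((t:ℕ):ℤ)
        rw [hLdef, cdiv_le_iff hE, hxdef, hn0def, hEdef]
        rw [e1] at c1
        linarith
      · show ((t:ℕ):ℤ) < U
        rw [hUdef, lt_cdiv_iff hE, hxdef, hn0def, hEdef]
        rw [e1] at c2
        linarith
    · intro z hz
      rw [Finset.mem_Ico] at hz
      obtain ⟨hz1, hz2⟩ := hz
      have hz0 : 0 ≤ z := le_trans hL0 hz1
      have htz : ((z.toNat : ℕ) : ℤ) = z := Int.toNat_of_nonneg hz0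
      rw [hLdef, cdiv_le_iff hE, hxdef, hn0def, hEdef] at hz1
      rw [hUdef, lt_cdiv_iff hE, hxdef, hn0def, hEdef] at hz2
      have e1z : (g:ℤ)^j*((ρ:ℤ)+(b:ℤ)^c*z) = (g:ℤ)^j*(ρ:ℤ) + ((g:ℤ)^j*(b:ℤ)^c)*z := by ring
      have c1 : (s:ℤ)*(b:ℤ)^k ≤ (g:ℤ)^j*((ρ:ℤ)+(b:ℤ)^c*z) := by rw [e1z]; linarith [hz1]
      have c2 : (g:ℤ)^j*((ρ:ℤ)+(b:ℤ)^c*z) < ((s:ℤ)+1)*(b:ℤ)^k := by rw [e1z]; linarith [hz2]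
      have hsg : (s:ℤ)+1 ≤ (g:ℤ)^j := by exact_mod_cast hs
      have hzlt : z < ((b:ℕ)^(k-c) : ℤ) := by
        have hsg1 : (0:ℤ) < (b:ℤ)^k := by positivity
        have h5 : ((s:ℤ)+1)*(b:ℤ)^k ≤ (g:ℤ)^j*(b:ℤ)^k :=
          mul_le_mul_of_nonneg_right hsg (by positivity)
        have h1 : ((g:ℤ)^j*(b:ℤ)^c)*z < (g:ℤ)^j*(b:ℤ)^k := by
          rw [e1z] at c2
          have h6 : (0:ℤ) ≤ (g:ℤ)^j*(ρ:ℤ) := by positivity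
          linarith [c2, h5, h6]
        have h2 : ((b:ℤ))^k = (b:ℤ)^c*(b:ℤ)^(k-c) := by
          rw [← pow_add]; congr 1; omega
        have h3 : ((g:ℤ)^j*(b:ℤ)^c)*z < ((g:ℤ)^j*(b:ℤ)^c)*((b:ℤ)^(k-c)) := by
          rw [h2] at h1; linarith [h1]
        have h4 := lt_of_mul_lt_mul_left h3 (by positivity : (0:ℤ) ≤ (g:ℤ)^j*(b:ℤ)^c)
        push_cast
        exact h4
      simp only [Finset.mem_filter, Finset.mem_range]
      constructor
      · have : (z.toNat : ℤ) < ((b:ℕ)^(k-c) : ℤ) := by rw [htz]; exact hzlt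
        exact_mod_cast this
      · rw [div_eq_iff_nat (bpow_pos hb k)]
        constructor
        · have : (s:ℤ)*(b:ℤ)^k ≤ (g:ℤ)^j*((ρ:ℤ)+(b:ℤ)^c*(z.toNat:ℤ)) := by
            rw [htz]; exact c1
          exact_mod_cast this
        · have : (g:ℤ)^j*((ρ:ℤ)+(b:ℤ)^c*(z.toNat:ℤ)) < ((s:ℤ)+1)*(b:ℤ)^k := by
            rw [htz]; exact c2
          exact_mod_cast this
    · intro t _; exact Int.toNat_natCast t
    · intro z hz
      rw [Finset.mem_Ico] at hz
      exact Int.toNat_of_nonneg (le_trans hL0 hz.1)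
  rw [hcard, Int.card_Ico]
  rw [Int.toNat_of_nonneg (by omega : (0:ℤ) ≤ U - L)]

lemma nu_diff_bound (hb : 1 < b) (hg : 2 ≤ g) (hbg : Nat.Coprime b g) (hab : Nat.Coprime a b)
    {j : ℕ} (hj : 1 ≤ j) {c k : ℕ} (hkc : c ≤ k)
    (hstruct : ordg g (b^k) = b^(k-c) * ordg g (b^c))
    {s s' : ℕ} (hs : s < g^j) (hs' : s' < g^j) :
    |(nu g b a j k s : ℤ) - (nu g b a j k s' : ℤ)| ≤ (ordg g (b^c) : ℤ) := by
  rw [nu_sum hb hg hbg hab hj hkc hstruct s, nu_sum hb hg hbg hab hj hkc hstruct s']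
  push_cast
  rw [← Finset.sum_sub_distrib]
  calc |∑ ρ ∈ Rc g b a c,
        ((((Finset.range (b^k)).filter (fun r => r % b^c = ρ ∧ g^j * r / b^k = s)).card : ℤ)
        - (((Finset.range (b^k)).filter (fun r => r % b^c = ρ ∧ g^j * r / b^k = s')).card : ℤ))|
      ≤ ∑ ρ ∈ Rc g b a c,
        |((((Finset.range (b^k)).filter (fun r => r % b^c = ρ ∧ g^j * r / b^k = s)).card : ℤ)
        - (((Finset.range (b^k)).filter (fun r => r % b^c = ρ ∧ g^j * r / b^k = s')).card : ℤ))| :=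
        Finset.abs_sum_le_sum_abs _ _
    _ ≤ ∑ _ρ ∈ Rc g b a c, 1 := by
        apply Finset.sum_le_sum
        intro ρ hρ
        have hρlt : ρ < b^c := Rc_lt hb hρ
        rw [F_int hb hg hkc hρlt hs, F_int hb hg hkc hρlt hs']
        set E : ℤ := (g:ℤ)^j*(b:ℤ)^c with hEdef
        have hE : 0 < E := by positivity
        have hn0 : (0:ℤ) ≤ ((b:ℤ))^k := by positivity
        have h1 := cdiv_add_bounds hE hn0 (x := (s:ℤ)*(b:ℤ)^k - (g:ℤ)^j*ρ)
        have h2 := cdiv_add_bounds hE hn0 (x := (s':ℤ)*(b:ℤ)^k - (g:ℤ)^j*ρ)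
        rw [abs_le]
        omega
    _ = ((Rc g b a c).card : ℤ) := by rw [Finset.sum_const]; simp
    _ = (ordg g (b^c) : ℤ) := by rw [Rc_card hb hbg hab]

lemma nu_le (hb : 1 < b) (hbg : Nat.Coprime b g) (j k s : ℕ) :
    nu g b a j k s ≤ ordg g (b^k) := by
  unfold nu
  calc ((Finset.Icc j (ordg g (b ^ k) + j - 1)).filter
        (fun i => (a * g ^ i / b ^ k) % g ^ j = s)).card
      ≤ (Finset.Icc j (ordg g (b ^ k) + j - 1)).card := Finset.card_filter_le _ _
    _ = ordg g (b ^ k) + j - 1 + 1 - j := Nat.card_Icc _ _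
    _ ≤ ordg g (b^k) := by
        have := d_pos hb hbg k
        omega

end CountSec

/-- There is a nonnegative constant `C` (depending only on `g, a, b, j`)
bounding the oscillation of absolute frequencies: `|ν_k(s) − ν_k(s')| ≤ C` for all
`k ≥ c_g(b)` and all `s, s' < g^j`. -/
theorem oscillation_bounded (g b a j : ℕ) (hg : 2 ≤ g) (hb : 1 < b)
    (hbg : Nat.gcd b g = 1) (ha : 0 < a) (hab : Nat.gcd a b = 1) (hj : 1 ≤ j) :
    ∃ C : ℕ, ∀ k : ℕ, cg g b ≤ k → ∀ s : ℕ, s < g ^ j → ∀ s' : ℕ, s' < g ^ j →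
      |(nu g b a j k s : ℤ) - (nu g b a j k s' : ℤ)| ≤ (C : ℤ) := by
  have hbg' : Nat.Coprime b g := hbg
  have hab' : Nat.Coprime a b := hab
  obtain ⟨c, hc1, hstruct⟩ := exists_structure hg hb hbg'
  set S : ℕ := (Finset.range (c+1)).sup (fun i => ordg g (b^i)) with hS
  refine ⟨S + ordg g (b^c), fun k hk s hs s' hs' => ?_⟩
  by_cases hkc : c ≤ k
  · have h1 := nu_diff_bound (a := a) hb hg hbg' hab' hj hkc (hstruct k hkc) hs hs'
    have h2 : (ordg g (b^c) : ℤ) ≤ ((S + ordg g (b^c) : ℕ) : ℤ) := by push_cast; omega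
    exact le_trans h1 h2
  · have h1 : nu g b a j k s ≤ ordg g (b^k) := nu_le hb hbg' j k s
    have h2 : nu g b a j k s' ≤ ordg g (b^k) := nu_le hb hbg' j k s'
    have h3 : ordg g (b^k) ≤ S :=
      Finset.le_sup (f := fun i => ordg g (b^i)) (Finset.mem_range.2 (by omega))
    rw [abs_le]
    constructor <;> push_cast <;> omega
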